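/- Let λ̂, λ̌, λ be real numbers with λ̌ ≠ λ̂ and λ̌ ≠ 2λ̂, set Λ₁ = λ̂/(λ̌ − λ̂) and Λ₂ = (λ̌² − 2λ̂λ̌ + λ̂λ)/(λ̌ − λ̂). Suppose a, b : I → ℝ are differentiable and positive on an open interval I, solve the ODE system a' = 2λ̂ + 2(λ − λ̂) a²/b², b' = 2λ̌ − 2(λ̌ − λ) a/b, and a(τ)/b(τ) ∉ {1, Λ₁} for all τ ∈ I. Then the function τ ↦ |1 − a/b|^{λ/(λ̌ − 2λ̂)} · |a/b − Λ₁|^{−Λ₂/(λ̌ − 2λ̂)} · b^{−1} is constant on I. -/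

import Mathlib

private lemma my_hasDerivAt_abs_rpow {g : ℝ → ℝ} {g' p x : ℝ} (hg : HasDerivAt g g' x)
    (h : g x ≠ 0) :
    HasDerivAt (fun τ => |g τ| ^ p) (p * |g x| ^ p / g x * g') x := by
  rcases h.lt_or_gt with hneg | hpos
  · have hev : ∀ᶠ τ in nhds x, g τ < 0 :=
      hg.continuousAt.eventually_lt continuousAt_const hneg
    have h1 : HasDerivAt (fun τ => (-g τ) ^ p) ((p * (-g x) ^ (p - 1)) * (-g')) x :=
      (Real.hasDerivAt_rpow_const (p := p) (Or.inl (by linarith))).comp x hg.neg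
    have h2 : HasDerivAt (fun τ => |g τ| ^ p) ((p * (-g x) ^ (p - 1)) * (-g')) x := by
      apply h1.congr_of_eventuallyEq
      filter_upwards [hev] with τ hτ
      rw [abs_of_neg hτ]
    convert h2 using 1
    rw [abs_of_neg hneg, Real.rpow_sub_one (by linarith)]
    field_simp
  · have hev : ∀ᶠ τ in nhds x, 0 < g τ :=
      continuousAt_const.eventually_lt hg.continuousAt hpos
    have h1 : HasDerivAt (fun τ => (g τ) ^ p) ((p * (g x) ^ (p - 1)) * g') x :=
      (Real.hasDerivAt_rpow_const (p := p) (Or.inl (by linarith))).comp x hg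
    have h2 : HasDerivAt (fun τ => |g τ| ^ p) ((p * (g x) ^ (p - 1)) * g') x := by
      apply h1.congr_of_eventuallyEq
      filter_upwards [hev] with τ hτ
      rw [abs_of_pos hτ]
    convert h2 using 1
    rw [abs_of_pos hpos, Real.rpow_sub_one (by linarith)]
    field_simp

set_option maxHeartbeats 1000000 in
/-- the first integral
`|1 − a/b|^{λ/(λ̌−2λ̂)} · |a/b − Λ₁|^{−Λ₂/(λ̌−2λ̂)} · b⁻¹ = const` of the
Riemannian-submersion Ricci flow ODE system. -/
theorem stmt_14 (lamh lamc lam : ℝ) (hne : lamc ≠ lamh) (hne2 : lamc ≠ 2 * lamh)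
    (Λ₁ Λ₂ : ℝ) (hΛ₁ : Λ₁ = lamh / (lamc - lamh))
    (hΛ₂ : Λ₂ = (lamc ^ 2 - 2 * lamh * lamc + lamh * lam) / (lamc - lamh))
    (s t : ℝ) (a b : ℝ → ℝ)
    (hapos : ∀ τ ∈ Set.Ioo s t, 0 < a τ)
    (hbpos : ∀ τ ∈ Set.Ioo s t, 0 < b τ)
    (ha : ∀ τ ∈ Set.Ioo s t,
      HasDerivAt a (2 * lamh + 2 * (lam - lamh) * (a τ) ^ 2 / (b τ) ^ 2) τ)
    (hb : ∀ τ ∈ Set.Ioo s t,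
      HasDerivAt b (2 * lamc - 2 * (lamc - lam) * (a τ / b τ)) τ)
    (hy : ∀ τ ∈ Set.Ioo s t, a τ / b τ ≠ 1 ∧ a τ / b τ ≠ Λ₁) :
    ∃ C : ℝ, ∀ τ ∈ Set.Ioo s t,
      |1 - a τ / b τ| ^ (lam / (lamc - 2 * lamh)) *
        |a τ / b τ - Λ₁| ^ (-(Λ₂ / (lamc - 2 * lamh))) * (b τ)⁻¹ = C := by
  by_cases hst : s < t
  case neg =>
    exact ⟨0, fun τ hτ => absurd hτ (by rw [Set.Ioo_eq_empty hst]; simp)⟩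
  set p : ℝ := lam / (lamc - 2 * lamh) with hp
  set q : ℝ := -(Λ₂ / (lamc - 2 * lamh)) with hq
  clear_value p q
  set F : ℝ → ℝ := fun τ =>
    |1 - a τ / b τ| ^ p * |a τ / b τ - Λ₁| ^ q * (b τ)⁻¹ with hF
  have hD : lamc - 2 * lamh ≠ 0 := sub_ne_zero.mpr hne2
  have hE : lamc - lamh ≠ 0 := sub_ne_zero.mpr hne
  have key : ∀ τ ∈ Set.Ioo s t, HasDerivAt F 0 τ := by
    intro τ hτ
    have hbne : b τ ≠ 0 := (hbpos τ hτ).ne'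
    have hg1 : (1 : ℝ) - a τ / b τ ≠ 0 := sub_ne_zero.mpr (Ne.symm (hy τ hτ).1)
    have hg2 : a τ / b τ - Λ₁ ≠ 0 := sub_ne_zero.mpr (hy τ hτ).2
    have hg2' : a τ / b τ - lamh / (lamc - lamh) ≠ 0 := by rw [hΛ₁] at hg2; exact hg2
    have hba : b τ - a τ ≠ 0 := by
      intro h
      apply hg1
      have hab : a τ = b τ := by linarith
      rw [hab, div_self hbne]
      ring
    have hba' : a τ - b τ ≠ 0 := by intro h; exact hba (by linarith)
    have hnum : a τ * (lamc - lamh) - lamh * b τ ≠ 0 := by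
      intro h
      apply hg2'
      have : a τ / b τ = lamh / (lamc - lamh) := by
        field_simp
        linarith
      rw [this]
      ring
    have hnum' : lamh * b τ - a τ * (lamc - lamh) ≠ 0 := by intro h; exact hnum (by linarith)
    have hnum2 : (lamc - lamh) * a τ - lamh * b τ ≠ 0 := by intro h; exact hnum (by linarith)
    have hnum3 : lamh * b τ - (lamc - lamh) * a τ ≠ 0 := by intro h; exact hnum (by linarith)
    set ad := 2 * lamh + 2 * (lam - lamh) * (a τ) ^ 2 / (b τ) ^ 2 with had
    set bd := 2 * lamc - 2 * (lamc - lam) * (a τ / b τ) with hbd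
    have hyd : HasDerivAt (fun τ => a τ / b τ)
        ((ad * b τ - a τ * bd) / (b τ) ^ 2) τ := (ha τ hτ).div (hb τ hτ) hbne
    have hyd2 : (ad * b τ - a τ * bd) / (b τ) ^ 2 =
        2 * (lamc - lamh) * (a τ / b τ - 1) * (a τ / b τ - lamh / (lamc - lamh)) / b τ := by
      rw [had, hbd]
      field_simp
      ring
    rw [hyd2] at hyd
    set K := 2 * (lamc - lamh) * (a τ / b τ - 1) *
        (a τ / b τ - lamh / (lamc - lamh)) / b τ with hK
    have hd1 : HasDerivAt (fun τ => 1 - a τ / b τ) (-K) τ := by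
      exact hyd.const_sub 1
    have hd2 : HasDerivAt (fun τ => a τ / b τ - Λ₁) K τ := by
      exact hyd.sub_const Λ₁
    have hA : HasDerivAt (fun τ => |1 - a τ / b τ| ^ p)
        (p * |1 - a τ / b τ| ^ p / (1 - a τ / b τ) * (-K)) τ :=
      my_hasDerivAt_abs_rpow hd1 hg1
    have hB : HasDerivAt (fun τ => |a τ / b τ - Λ₁| ^ q)
        (q * |a τ / b τ - Λ₁| ^ q / (a τ / b τ - Λ₁) * K) τ :=
      my_hasDerivAt_abs_rpow hd2 hg2
    set A := |1 - a τ / b τ| ^ p with hAv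
    set B := |a τ / b τ - Λ₁| ^ q with hBv
    clear_value A B
    have hnumL : a τ - Λ₁ * b τ ≠ 0 := by
      intro h
      apply hg2
      have hab : a τ = Λ₁ * b τ := by linarith
      rw [hab, mul_div_assoc, div_self hbne, mul_one]
      ring
    have h5 : a τ * b τ ^ 3 - b τ ^ 4 * Λ₁ ≠ 0 := by
      have h6 : a τ * b τ ^ 3 - b τ ^ 4 * Λ₁ = b τ ^ 3 * (a τ - Λ₁ * b τ) := by ring
      rw [h6]
      exact mul_ne_zero (pow_ne_zero 3 hbne) hnumL
    have hA' : HasDerivAt (fun τ => |1 - a τ / b τ| ^ p)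
        (p * A * (2 * (lamc - lamh)) * (a τ / b τ - Λ₁) / b τ) τ := by
      convert hA using 1
      rw [hK, ← hΛ₁]
      field_simp
      ring
    have hB' : HasDerivAt (fun τ => |a τ / b τ - Λ₁| ^ q)
        (q * B * (2 * (lamc - lamh)) * (a τ / b τ - 1) / b τ) τ := by
      convert hB using 1
      rw [hK, ← hΛ₁]
      set yv := a τ / b τ with hyv
      clear_value yv
      field_simp
    have hbinv : HasDerivAt (fun τ => (b τ)⁻¹) (-bd / (b τ) ^ 2) τ := (hb τ hτ).inv hbne
    have htot := (hA'.mul hB').mul hbinv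
    have hsc : 2 * (lamc - lamh) * p * (a τ / b τ - Λ₁) +
        2 * (lamc - lamh) * q * (a τ / b τ - 1) - bd = 0 := by
      rw [hp, hq, hΛ₁, hΛ₂, hbd]
      field_simp
      ring
    have hexp : (p * A * (2 * (lamc - lamh)) * (a τ / b τ - Λ₁) / b τ * B +
          A * (q * B * (2 * (lamc - lamh)) * (a τ / b τ - 1) / b τ)) * (b τ)⁻¹ +
          A * B * (-bd / b τ ^ 2) =
        A * B / b τ ^ 2 * (2 * (lamc - lamh) * p * (a τ / b τ - Λ₁) +
          2 * (lamc - lamh) * q * (a τ / b τ - 1) - bd) := by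
      field_simp
      ring
    refine htot.congr_deriv ?_
    simp only [Pi.mul_apply]
    rw [← hAv, ← hBv, hexp, hsc, mul_zero]
  obtain ⟨τ₀, hτ₀⟩ : ∃ τ₀, τ₀ ∈ Set.Ioo s t := ⟨(s + t) / 2, by constructor <;> linarith⟩
  refine ⟨F τ₀, fun τ hτ => ?_⟩
  exact (convex_Ioo s t).is_const_of_fderivWithin_eq_zero
    (fun x hx => (key x hx).differentiableAt.differentiableWithinAt)
    (fun x hx => by
      rw [fderivWithin_of_isOpen isOpen_Ioo hx, (key x hx).hasFDerivAt.fderiv]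
      ext u
      simp) hτ hτ₀
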